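/- Let E ⊆ ℝ^d be a nonempty porous set. Then there exist a constant C ≥ 1 and an exponent s ∈ (0,d) such that for every x ∈ E and all radii 0 < r < R ≤ 1 the set E ∩ B(x,R) can be covered by at most C·(R/r)^s balls of radius r centered at points of E. -/

import Mathlib

open MeasureTheory Metric ENNReal

section Helpers

variable {d : ℕ}
local notation "V" => EuclideanSpace ℝ (Fin d)
local notation "ω" => volume (ball (0 : EuclideanSpace ℝ (Fin d)) 1)

lemma my_nontrivial (hd : 0 < d) : Nontrivial (EuclideanSpace ℝ (Fin d)) := by
  have : Nonempty (Fin d) := ⟨⟨0, hd⟩⟩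
  infer_instance

lemma my_vol_ball (hd : 0 < d) (p : V) {a : ℝ} (ha : 0 ≤ a) :
    volume (ball p a) = ENNReal.ofReal (a ^ d) * ω := by
  haveI := my_nontrivial hd
  rw [Measure.addHaar_ball volume p ha, finrank_euclideanSpace_fin]

lemma my_omega_pos : ω ≠ 0 := (measure_ball_pos volume 0 one_pos).ne'

lemma my_omega_fin : ω ≠ ⊤ := measure_ball_lt_top.ne

lemma my_extract {n : ℕ} {A B : ℝ} (hB : 0 ≤ B)
    (h : (n : ℝ≥0∞) * (ENNReal.ofReal A * ω) ≤ ENNReal.ofReal B * ω) :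
    (n : ℝ) * A ≤ B := by
  rw [← mul_assoc] at h
  have h2 := (ENNReal.mul_le_mul_iff_left my_omega_pos my_omega_fin).mp h
  rw [← ENNReal.ofReal_natCast n, ← ENNReal.ofReal_mul (by positivity)] at h2
  exact (ENNReal.ofReal_le_ofReal_iff hB).mp h2

lemma my_card_bound (hd : 0 < d) {F : Finset V} {x₀ : V} {R₀ δ : ℝ} (hδ : 0 < δ) (hR₀ : 0 ≤ R₀)
    (hP : ∀ p ∈ F, p ∈ ball x₀ R₀)
    (hsep : ∀ p ∈ F, ∀ q ∈ F, p ≠ q → δ ≤ dist p q) :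
    (F.card : ℝ) * (δ/2) ^ d ≤ (R₀ + δ) ^ d := by
  have hdisj : (F : Set V).PairwiseDisjoint (fun p => ball p (δ/2)) := by
    intro p hp q hq hpq
    exact ball_disjoint_ball (by linarith [hsep p (by simpa using hp) q (by simpa using hq) hpq])
  have hsub : ∀ p ∈ F, ball p (δ/2) ⊆ ball x₀ (R₀ + δ) := by
    intro p hp z hz
    have h1 : dist z p < δ/2 := mem_ball.mp hz
    have h2 : dist p x₀ < R₀ := mem_ball.mp (hP p hp)
    exact mem_ball.mpr (lt_of_le_of_lt (dist_triangle z p x₀) (by linarith))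
  have key : (F.card : ℝ≥0∞) * (ENNReal.ofReal ((δ/2) ^ d) * ω) ≤ ENNReal.ofReal ((R₀+δ)^d) * ω := by
    calc (F.card : ℝ≥0∞) * (ENNReal.ofReal ((δ/2) ^ d) * ω)
        = ∑ p ∈ F, volume (ball p (δ/2)) := by
          rw [Finset.sum_congr rfl (fun p _ => my_vol_ball hd p (by linarith))]
          simp [Finset.sum_const, nsmul_eq_mul]
      _ = volume (⋃ p ∈ F, ball p (δ/2)) :=
          (measure_biUnion_finset hdisj (fun p _ => measurableSet_ball)).symm
      _ ≤ volume (ball x₀ (R₀ + δ)) := measure_mono (Set.iUnion₂_subset hsub)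
      _ = ENNReal.ofReal ((R₀+δ)^d) * ω := my_vol_ball hd x₀ (by linarith)
  exact my_extract (by positivity) key

lemma my_fin (hd : 0 < d) {P : Set V} {x₀ : V} {R₀ δ : ℝ} (hδ : 0 < δ)
    (hP : P ⊆ ball x₀ R₀)
    (hsep : ∀ p ∈ P, ∀ q ∈ P, p ≠ q → δ ≤ dist p q) : P.Finite := by
  by_contra hinf
  have hinf' : P.Infinite := hinf
  have hR₀ : 0 ≤ R₀ := by
    obtain ⟨p, hp⟩ := hinf'.nonempty
    exact le_of_lt (lt_of_le_of_lt dist_nonneg (mem_ball.mp (hP hp)))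
  set M : ℝ := (R₀ + δ)^d / (δ/2)^d with hM
  obtain ⟨F, hFP, hFcard⟩ := hinf'.exists_subset_card_eq (⌊M⌋₊ + 1)
  have hb := my_card_bound hd hδ hR₀ (fun p hp => hP (hFP (by simpa using hp)))
    (fun p hp q hq hpq => hsep p (hFP (by simpa using hp)) q (hFP (by simpa using hq)) hpq)
  have hδd : (0:ℝ) < (δ/2)^d := by positivity
  have hle : (F.card : ℝ) ≤ M := by
    rw [hM, le_div_iff₀ hδd]
    exact hb
  rw [hFcard] at hle
  have := Nat.lt_floor_add_one M
  push_cast at hle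
  linarith

lemma my_net {A : Set V} (hA : A.Nonempty) {δ : ℝ} (hδ : 0 < δ) :
    ∃ P : Set V, P ⊆ A ∧ (∀ p ∈ P, ∀ q ∈ P, p ≠ q → δ ≤ dist p q) ∧
      ∀ e ∈ A, ∃ p ∈ P, dist e p < δ := by
  obtain ⟨x₀, hx₀⟩ := hA
  set S : Set (Set V) := {P | P ⊆ A ∧ ∀ p ∈ P, ∀ q ∈ P, p ≠ q → δ ≤ dist p q} with hS
  have hzorn := zorn_subset_nonempty S ?_ {x₀} ?_
  · obtain ⟨P, -, hPS, hmax⟩ := hzorn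
    refine ⟨P, hPS.1, hPS.2, ?_⟩
    intro e he
    by_contra hcon
    push_neg at hcon
    have heP : e ∉ P := fun h => by have := hcon e h; rw [dist_self] at this; linarith
    have : insert e P ∈ S := by
      constructor
      · exact Set.insert_subset he hPS.1
      · intro p hp q hq hpq
        rcases hp with rfl | hp
        · rcases hq with rfl | hq
          · exact absurd rfl hpq
          · exact hcon q hq
        · rcases hq with rfl | hq
          · rw [dist_comm]; exact hcon p hp
          · exact hPS.2 p hp q hq hpq
    have := hmax this (Set.subset_insert e P)
    exact heP (this (Set.mem_insert e P))
  · intro c hcS hchain hcne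
    refine ⟨⋃₀ c, ⟨?_, ?_⟩, fun s hs => Set.subset_sUnion_of_mem hs⟩
    · exact Set.sUnion_subset fun s hs => (hcS hs).1
    · intro p hp q hq hpq
      obtain ⟨sp, hsp, hpsp⟩ := hp
      obtain ⟨sq, hsq, hqsq⟩ := hq
      rcases hchain.total hsp hsq with h | h
      · exact (hcS hsq).2 p (h hpsp) q hqsq hpq
      · exact (hcS hsp).2 p hpsp q (h hqsq) hpq
  · exact ⟨Set.singleton_subset_iff.mpr hx₀, by simp⟩

lemma my_pack (hd : 0 < d) {F : Finset V} {a : ℝ} (ha : 0 ≤ a) {S : Set V}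
    (hdisj : (F : Set V).PairwiseDisjoint (fun p => ball p a))
    (hsub : ∀ p ∈ F, ball p a ⊆ S) :
    (F.card : ℝ≥0∞) * (ENNReal.ofReal (a ^ d) * ω) ≤ volume S := by
  calc (F.card : ℝ≥0∞) * (ENNReal.ofReal (a ^ d) * ω)
      = ∑ p ∈ F, volume (ball p a) := by
        rw [Finset.sum_congr rfl (fun p _ => my_vol_ball hd p ha)]
        simp [Finset.sum_const, nsmul_eq_mul]
    _ = volume (⋃ p ∈ F, ball p a) :=
        (measure_biUnion_finset hdisj (fun p _ => measurableSet_ball)).symm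
    _ ≤ volume S := measure_mono (Set.iUnion₂_subset hsub)

lemma my_step (hd : 0 < d) {E : Set V} {κ : ℝ} (hκ0 : 0 < κ) (hκ1 : κ ≤ 1)
    (hpor : ∀ x ∈ E, ∀ r : ℝ, 0 < r → r ≤ 1 →
      ∃ y ∈ ball x r, ball y (κ * r) ∩ E = ∅)
    {E' : Set V} (hE'E : E' ⊆ E) {x₀ : V} {R₀ : ℝ} (hbdd : E' ⊆ ball x₀ R₀)
    {ρ : ℝ} (hρ0 : 0 < ρ) (hρ1 : ρ ≤ 1) :
    volume (⋃ e ∈ E', ball e (κ/4 * ρ)) ≤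
      ENNReal.ofReal (1 - (κ/24)^d) * volume (⋃ e ∈ E', ball e ρ) := by
  rcases E'.eq_empty_or_nonempty with rfl | hne
  · simp
  -- the net
  obtain ⟨P, hPE', hPsep, hPcov⟩ := my_net hne (by linarith : (0:ℝ) < 5 * ρ)
  have hPfin : P.Finite := my_fin hd (by linarith : (0:ℝ) < 5*ρ) (hPE'.trans hbdd) hPsep
  set F : Finset V := hPfin.toFinset with hF
  have hFP : ∀ p ∈ F, p ∈ P := fun p hp => hPfin.mem_toFinset.mp hp
  -- holes
  have hch : ∀ p, p ∈ P → ∃ y ∈ ball p (ρ/2), ball y (κ * (ρ/2)) ∩ E = ∅ :=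
    fun p hp => hpor p (hE'E (hPE' hp)) (ρ/2) (by linarith) (by linarith)
  choose! y hy1 hy2 using hch
  set H : V → Set V := fun p => ball (y p) (κ/4 * ρ) with hH
  have hκρ : (0:ℝ) < κ/4 * ρ := by positivity
  -- hole facts
  have hHsub : ∀ p ∈ F, H p ⊆ ⋃ e ∈ E', ball e ρ := by
    intro p hp z hz
    have h1 : dist z (y p) < κ/4 * ρ := mem_ball.mp hz
    have h2 : dist (y p) p < ρ/2 := mem_ball.mp (hy1 p (hFP p hp))
    have : z ∈ ball p ρ := mem_ball.mpr (lt_of_le_of_lt (dist_triangle z (y p) p)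
      (by nlinarith))
    exact Set.mem_biUnion (hPE' (hFP p hp)) this
  have hHdisj : (F : Set V).PairwiseDisjoint H := by
    intro p hp q hq hpq
    have hsep := hPsep p (hFP p (by simpa using hp)) q (hFP q (by simpa using hq)) hpq
    have h1 : dist (y p) p < ρ/2 := mem_ball.mp (hy1 p (hFP p (by simpa using hp)))
    have h2 : dist (y q) q < ρ/2 := mem_ball.mp (hy1 q (hFP q (by simpa using hq)))
    refine ball_disjoint_ball ?_
    have := dist_triangle4 p (y p) (y q) q
    have h3 : dist p q ≤ dist p (y p) + dist (y p) (y q) + dist (y q) q := this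
    rw [dist_comm p (y p)] at h3
    nlinarith
  have hHT : ∀ p ∈ F, Disjoint (H p) (⋃ e ∈ E', ball e (κ/4 * ρ)) := by
    intro p hp
    rw [Set.disjoint_left]
    intro z hzH hzT
    obtain ⟨e, he, hze⟩ := Set.mem_iUnion₂.mp hzT
    have hze' : dist z e < κ/4 * ρ := mem_ball.mp hze
    have heE : e ∈ E := hE'E he
    have heY : e ∉ ball (y p) (κ * (ρ/2)) := by
      intro hcon
      have := hy2 p (hFP p hp)
      exact absurd (Set.mem_inter hcon heE) (by rw [this]; exact Set.notMem_empty e)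
    have hd1 : κ * (ρ/2) ≤ dist e (y p) := by
      by_contra hcon
      exact heY (mem_ball.mpr (lt_of_not_ge hcon))
    have hd2 : dist z (y p) < κ/4 * ρ := mem_ball.mp hzH
    have := dist_triangle e z (y p)
    rw [dist_comm e z] at this
    nlinarith
  have hcov : (⋃ e ∈ E', ball e ρ) ⊆ ⋃ p ∈ F, ball p (6 * ρ) := by
    intro z hz
    obtain ⟨e, he, hze⟩ := Set.mem_iUnion₂.mp hz
    obtain ⟨p, hp, hep⟩ := hPcov e he
    refine Set.mem_biUnion (hPfin.mem_toFinset.mpr hp) (mem_ball.mpr ?_)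
    have := dist_triangle z e p
    have h1 : dist z e < ρ := mem_ball.mp hze
    linarith
  -- volumes
  set B := volume (⋃ e ∈ E', ball e ρ) with hB
  set A := volume (⋃ e ∈ E', ball e (κ/4 * ρ)) with hA
  have hBfin : B ≠ ⊤ := by
    have hsub' : (⋃ e ∈ E', ball e ρ) ⊆ ball x₀ (R₀ + ρ) := by
      intro z hz
      obtain ⟨e, he, hze⟩ := Set.mem_iUnion₂.mp hz
      have h1 : dist z e < ρ := mem_ball.mp hze
      have h2 : dist e x₀ < R₀ := mem_ball.mp (hbdd he)
      exact mem_ball.mpr (lt_of_le_of_lt (dist_triangle z e x₀) (by linarith))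
    exact (lt_of_le_of_lt (measure_mono hsub') measure_ball_lt_top).ne
  have hvolH : volume (⋃ p ∈ F, H p) = (F.card : ℝ≥0∞) * (ENNReal.ofReal ((κ/4*ρ)^d) * ω) := by
    rw [measure_biUnion_finset hHdisj (fun p _ => measurableSet_ball)]
    rw [Finset.sum_congr rfl (fun p _ => my_vol_ball hd (y p) (le_of_lt hκρ))]
    simp [Finset.sum_const, nsmul_eq_mul]
  have hBle : B ≤ (F.card : ℝ≥0∞) * (ENNReal.ofReal ((6*ρ)^d) * ω) := by
    calc B ≤ volume (⋃ p ∈ F, ball p (6*ρ)) := measure_mono hcov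
      _ ≤ ∑ p ∈ F, volume (ball p (6*ρ)) := measure_biUnion_finset_le F _
      _ = (F.card : ℝ≥0∞) * (ENNReal.ofReal ((6*ρ)^d) * ω) := by
          rw [Finset.sum_congr rfl (fun p _ => my_vol_ball hd p (by linarith))]
          simp [Finset.sum_const, nsmul_eq_mul]
  have hkey : A + volume (⋃ p ∈ F, H p) ≤ B := by
    rw [← measure_union _ (Finset.measurableSet_biUnion F (fun p _ => measurableSet_ball))]
    · refine measure_mono (Set.union_subset ?_ (Set.iUnion₂_subset hHsub))
      refine Set.iUnion₂_mono fun e _ => ball_subset_ball (by nlinarith)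
    · rw [Set.disjoint_right]
      intro z hz hzA
      obtain ⟨p, hp, hzp⟩ := Set.mem_iUnion₂.mp hz
      exact (Set.disjoint_left.mp (hHT p hp)) hzp hzA
  -- the theta inequality
  have hθ : ENNReal.ofReal ((κ/24)^d) * B ≤ volume (⋃ p ∈ F, H p) := by
    rw [hvolH]
    calc ENNReal.ofReal ((κ/24)^d) * B
        ≤ ENNReal.ofReal ((κ/24)^d) * ((F.card : ℝ≥0∞) * (ENNReal.ofReal ((6*ρ)^d) * ω)) :=
          mul_le_mul_right hBle _
      _ = (F.card : ℝ≥0∞) * (ENNReal.ofReal ((κ/4*ρ)^d) * ω) := by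
          rw [← mul_assoc, ← mul_assoc, mul_comm (ENNReal.ofReal ((κ/24)^d)) (F.card : ℝ≥0∞),
            mul_assoc (F.card : ℝ≥0∞), ← ENNReal.ofReal_mul (by positivity), ← mul_pow]
          ring_nf
  have hfinal : A + ENNReal.ofReal ((κ/24)^d) * B ≤ B := le_trans (add_le_add_right hθ A) hkey
  have hsub : A ≤ B - ENNReal.ofReal ((κ/24)^d) * B :=
    ENNReal.le_sub_of_add_le_right (ENNReal.mul_ne_top ENNReal.ofReal_ne_top hBfin) hfinal
  have heq : ENNReal.ofReal (1 - (κ/24)^d) * B = B - ENNReal.ofReal ((κ/24)^d) * B := by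
    have h1 : (κ/24:ℝ)^d ≤ 1 := by
      apply pow_le_one₀ (by positivity)
      linarith
    rw [ENNReal.ofReal_sub 1 (by positivity), ENNReal.sub_mul (fun _ _ => hBfin),
      ENNReal.ofReal_one, one_mul]
  rw [heq]
  exact hsub

lemma my_iter (hd : 0 < d) {E : Set V} {κ : ℝ} (hκ0 : 0 < κ) (hκ1 : κ ≤ 1)
    (hpor : ∀ x ∈ E, ∀ r : ℝ, 0 < r → r ≤ 1 →
      ∃ y ∈ ball x r, ball y (κ * r) ∩ E = ∅)
    {E' : Set V} (hE'E : E' ⊆ E) {x₀ : V} {R₀ : ℝ} (hbdd : E' ⊆ ball x₀ R₀)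
    {R : ℝ} (hR0 : 0 < R) (hR1 : R ≤ 1) (k : ℕ) :
    volume (⋃ e ∈ E', ball e ((κ/4)^k * R)) ≤
      ENNReal.ofReal (1 - (κ/24)^d) ^ k * volume (⋃ e ∈ E', ball e R) := by
  induction k with
  | zero => simp
  | succ k ih =>
    have hρ0 : 0 < (κ/4)^k * R := by positivity
    have hρ1 : (κ/4)^k * R ≤ 1 := by
      have h1 : (κ/4:ℝ)^k ≤ 1 := pow_le_one₀ (by positivity) (by linarith)
      nlinarith
    have hstep := my_step hd hκ0 hκ1 hpor hE'E hbdd hρ0 hρ1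
    have heq : (κ/4:ℝ)^(k+1) * R = κ/4 * ((κ/4)^k * R) := by ring
    rw [heq]
    calc volume (⋃ e ∈ E', ball e (κ/4 * ((κ/4)^k * R)))
        ≤ ENNReal.ofReal (1 - (κ/24)^d) * volume (⋃ e ∈ E', ball e ((κ/4)^k * R)) := hstep
      _ ≤ ENNReal.ofReal (1 - (κ/24)^d) *
          (ENNReal.ofReal (1 - (κ/24)^d) ^ k * volume (⋃ e ∈ E', ball e R)) :=
          mul_le_mul_right ih _
      _ = ENNReal.ofReal (1 - (κ/24)^d) ^ (k+1) * volume (⋃ e ∈ E', ball e R) := by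
          rw [pow_succ, ← mul_assoc, mul_comm (ENNReal.ofReal (1 - (κ/24)^d) ^ k)]

end Helpers

/-- A porous subset of `ℝ^d` has a covering property with an exponent `s < d`:
for `0 < r < R ≤ 1`, the set `E ∩ B(x,R)` can be covered by at most `C (R/r)^s`
balls of radius `r` centered at points of `E`. -/
theorem porous_implies_covering_property (d : ℕ) (E : Set (EuclideanSpace ℝ (Fin d)))
    (hEne : E.Nonempty) (κ : ℝ) (hκ0 : 0 < κ) (hκ1 : κ ≤ 1)
    (hpor : ∀ x ∈ E, ∀ r : ℝ, 0 < r → r ≤ 1 →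
      ∃ y ∈ ball x r, ball y (κ * r) ∩ E = ∅) :
    ∃ C s : ℝ, 1 ≤ C ∧ 0 < s ∧ s < d ∧
      ∀ x ∈ E, ∀ r R : ℝ, 0 < r → r < R → R ≤ 1 →
        ∃ T : Finset (EuclideanSpace ℝ (Fin d)),
          (T : Set (EuclideanSpace ℝ (Fin d))) ⊆ E ∧
          E ∩ ball x R ⊆ ⋃ y ∈ T, ball y r ∧ (T.card : ℝ) ≤ C * (R / r) ^ s := by
  -- dimension zero is impossible
  rcases Nat.eq_zero_or_pos d with hd0 | hd
  · exfalso
    subst hd0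
    obtain ⟨x, hx⟩ := hEne
    obtain ⟨y, -, hy⟩ := hpor x hx 1 one_pos le_rfl
    have hxy : x = y := PiLp.ext (fun i => i.elim0)
    have hxball : x ∈ ball y (κ * 1) := by
      rw [mem_ball, hxy, dist_self]
      linarith
    exact absurd (Set.mem_inter hxball hx) (by rw [hy]; exact Set.notMem_empty x)
  -- constants
  set lam : ℝ := κ/4 with hlam
  set θ : ℝ := (κ/24)^d with hθ
  set β : ℝ := 1 - θ with hβ
  have hlam0 : 0 < lam := by positivity
  have hlam1 : lam < 1 := by rw [hlam]; linarith
  have hθ0 : 0 < θ := by positivity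
  have hθ24 : θ ≤ 1/24 := by
    calc θ ≤ (1/24:ℝ)^d := pow_le_pow_left₀ (by positivity) (by linarith) d
      _ ≤ 1/24 := pow_le_of_le_one (by norm_num) (by norm_num) (by omega)
  have hβ0 : 0 < β := by rw [hβ]; linarith
  have hβ1 : β < 1 := by rw [hβ]; linarith
  have hlamd : lam^d < β := by
    have h1 : lam^d ≤ 1/4 := by
      calc lam^d ≤ (1/4:ℝ)^d := pow_le_pow_left₀ (by positivity) (by rw [hlam]; linarith) d
        _ ≤ 1/4 := pow_le_of_le_one (by norm_num) (by norm_num) (by omega)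
    rw [hβ]; linarith
  have hloglam : Real.log lam < 0 := Real.log_neg hlam0 hlam1
  have hlogβ : Real.log β < 0 := Real.log_neg hβ0 hβ1
  set α : ℝ := Real.log β / Real.log lam with hα
  have hα0 : 0 < α := div_pos_of_neg_of_neg hlogβ hloglam
  have hαd : α < d := by
    rw [hα, div_lt_iff_of_neg hloglam]
    calc (d:ℝ) * Real.log lam = Real.log (lam^d) := by rw [Real.log_pow]
      _ < Real.log β := Real.log_lt_log (by positivity) hlamd
  have hβlam : lam ^ α = β := by
    rw [Real.rpow_def_of_pos hlam0, hα, mul_comm,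
      div_mul_cancel₀ _ (ne_of_lt hloglam), Real.exp_log hβ0]
  set C : ℝ := 4^d / β with hC
  have hC1 : 1 ≤ C := by
    rw [hC, le_div_iff₀ hβ0, one_mul]
    exact le_of_lt (lt_of_lt_of_le hβ1 (one_le_pow₀ (by norm_num)))
  refine ⟨C, (d:ℝ) - α, hC1, by linarith, by linarith, ?_⟩
  intro x hx r R hr hrR hR1
  have hR0 : 0 < R := lt_trans hr hrR
  set E' : Set (EuclideanSpace ℝ (Fin d)) := E ∩ ball x R with hE'
  have hE'E : E' ⊆ E := Set.inter_subset_left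
  have hbdd : E' ⊆ ball x R := Set.inter_subset_right
  have hE'ne : E'.Nonempty := ⟨x, hx, mem_ball_self hR0⟩
  -- the net
  obtain ⟨P, hPE', hPsep, hPcov⟩ := my_net hE'ne hr
  have hPfin : P.Finite := my_fin hd hr (hPE'.trans hbdd) hPsep
  set T : Finset (EuclideanSpace ℝ (Fin d)) := hPfin.toFinset with hT
  have hTP : ∀ p ∈ T, p ∈ P := fun p hp => hPfin.mem_toFinset.mp hp
  refine ⟨T, ?_, ?_, ?_⟩
  · intro p hp
    exact hE'E (hPE' (hTP p hp))
  · intro e he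
    obtain ⟨p, hp, hep⟩ := hPcov e he
    exact Set.mem_iUnion₂.mpr ⟨p, hPfin.mem_toFinset.mpr hp, mem_ball.mpr hep⟩
  -- cardinality bound
  -- choose the scale index k
  have hex : ∃ k : ℕ, lam^(k+1) * R < r/2 := by
    obtain ⟨n, hn⟩ := exists_pow_lt_of_lt_one (show (0:ℝ) < r/(2*R) by positivity) hlam1
    refine ⟨n, ?_⟩
    have h1 : lam^(n+1) ≤ lam^n := pow_le_pow_of_le_one hlam0.le hlam1.le (by omega)
    have h2 : lam^n * R < r/2 := by
      have h3 := mul_lt_mul_of_pos_right hn hR0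
      have h4 : r/(2*R) * R = r/2 := by field_simp
      linarith
    nlinarith [pow_nonneg hlam0.le n, pow_nonneg hlam0.le (n+1)]
  set k := Nat.find hex with hkdef
  have hk : lam^(k+1) * R < r/2 := Nat.find_spec hex
  have hk' : r/2 ≤ lam^k * R := by
    rcases Nat.eq_zero_or_pos k with h0 | hpos
    · rw [h0]; simp; linarith
    · have := Nat.find_min hex (show k - 1 < k by omega)
      push_neg at this
      have heq : k - 1 + 1 = k := by omega
      rw [heq] at this
      exact this
  -- packing estimate
  have hdisj : (T : Set (EuclideanSpace ℝ (Fin d))).PairwiseDisjoint (fun p => ball p (r/2)) := by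
    intro p hp q hq hpq
    exact ball_disjoint_ball (by
      have := hPsep p (hTP p (by simpa using hp)) q (hTP q (by simpa using hq)) hpq
      linarith)
  have hsub : ∀ p ∈ T, ball p (r/2) ⊆ ⋃ e ∈ E', ball e (lam^k * R) := by
    intro p hp
    refine Set.subset_iUnion₂_of_subset p (hPE' (hTP p hp)) (ball_subset_ball ?_)
    linarith
  have hpack := my_pack hd (by positivity : (0:ℝ) ≤ r/2) hdisj hsub
  have hiter : volume (⋃ e ∈ E', ball e (lam^k * R)) ≤
      ENNReal.ofReal β ^ k * volume (⋃ e ∈ E', ball e R) := by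
    rw [hlam, hβ, hθ]
    exact my_iter hd hκ0 hκ1 hpor hE'E hbdd hR0 hR1 k
  have hTRsub : (⋃ e ∈ E', ball e R) ⊆ ball x (2*R) := by
    intro z hz
    obtain ⟨e, he, hze⟩ := Set.mem_iUnion₂.mp hz
    have h1 : dist z e < R := mem_ball.mp hze
    have h2 : dist e x < R := mem_ball.mp (hbdd he)
    exact mem_ball.mpr (lt_of_le_of_lt (dist_triangle z e x) (by linarith))
  have hkey : (T.card : ℝ≥0∞) * (ENNReal.ofReal ((r/2)^d) * volume (ball (0 : EuclideanSpace ℝ (Fin d)) 1)) ≤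
      ENNReal.ofReal (β^k * (2*R)^d) * volume (ball (0 : EuclideanSpace ℝ (Fin d)) 1) := by
    calc (T.card : ℝ≥0∞) * (ENNReal.ofReal ((r/2)^d) * volume (ball (0 : EuclideanSpace ℝ (Fin d)) 1))
        ≤ volume (⋃ e ∈ E', ball e (lam^k * R)) := hpack
      _ ≤ ENNReal.ofReal β ^ k * volume (⋃ e ∈ E', ball e R) := hiter
      _ ≤ ENNReal.ofReal β ^ k * volume (ball x (2*R)) :=
          mul_le_mul_right (measure_mono hTRsub) _
      _ = ENNReal.ofReal (β^k * (2*R)^d) * volume (ball (0 : EuclideanSpace ℝ (Fin d)) 1) := by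
          rw [my_vol_ball hd x (by positivity : (0:ℝ) ≤ 2*R),
            ← ENNReal.ofReal_pow hβ0.le, ← mul_assoc,
            ← ENNReal.ofReal_mul (by positivity)]
  have hreal : (T.card : ℝ) * (r/2)^d ≤ β^k * (2*R)^d := my_extract (by positivity) hkey
  -- real arithmetic to conclude
  have hβk : β^k ≤ (r/R)^α / β := by
    have h1 : (lam^k : ℝ) ≤ (r/(2*R))/lam := by
      rw [div_div, le_div_iff₀ (by positivity)]
      calc lam^k * (2*R*lam) = (lam^(k+1) * R) * 2 := by ring
        _ ≤ r := by linarith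
    have h2 : β^k = ((lam^k : ℝ)) ^ α := by
      rw [← hβlam, ← Real.rpow_natCast (lam ^ α) k, ← Real.rpow_mul hlam0.le,
        mul_comm, Real.rpow_mul hlam0.le, Real.rpow_natCast]
    rw [h2]
    calc ((lam^k : ℝ)) ^ α ≤ ((r/(2*R))/lam) ^ α :=
          Real.rpow_le_rpow (by positivity) h1 hα0.le
      _ = (r/(2*R))^α / lam^α := Real.div_rpow (by positivity) hlam0.le α
      _ ≤ (r/R)^α / lam^α := by
          apply (div_le_div_iff_of_pos_right (Real.rpow_pos_of_pos hlam0 α)).mpr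
          apply Real.rpow_le_rpow (by positivity) ?_ hα0.le
          apply div_le_div_of_nonneg_left hr.le hR0
          linarith
      _ = (r/R)^α / β := by rw [hβlam]
  -- final arithmetic
  have hrd : (0:ℝ) < (r/2)^d := by positivity
  have hcard : (T.card : ℝ) ≤ β^k * ((2*R)^d / (r/2)^d) := by
    rw [← mul_div_assoc, le_div_iff₀ hrd]
    exact hreal
  have hq : (2*R)^d / (r/2)^d = 4^d * (R/r)^d := by
    rw [← div_pow, ← mul_pow]
    congr 1
    field_simp
    ring
  have hRr0 : (0:ℝ) < R/r := by positivity
  have hfin2 : β^k * (4^d * (R/r)^d) ≤ ((r/R)^α / β) * (4^d * (R/r)^d) :=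
    mul_le_mul_of_nonneg_right hβk (by positivity)
  have hRrα : ((R/r:ℝ))^α ≠ 0 := (Real.rpow_pos_of_pos hRr0 α).ne'
  have hrw : ((r/R)^α / β) * (4^d * (R/r)^d) = C * (R/r) ^ ((d:ℝ) - α) := by
    have h2 : ((r/R : ℝ))^α = ((R/r)^α)⁻¹ := by
      rw [← Real.inv_rpow hRr0.le, inv_div]
    rw [Real.rpow_sub hRr0, Real.rpow_natCast, hC, h2]
    field_simp
  calc (T.card : ℝ) ≤ β^k * (4^d * (R/r)^d) := by rw [← hq]; exact hcard
    _ ≤ ((r/R)^α / β) * (4^d * (R/r)^d) := hfin2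
    _ = C * (R/r) ^ ((d:ℝ) - α) := hrw
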